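/- For all real numbers a, b, c with a > 0, c > 0 and ac − b² > 0, the integral over the upper half-plane ∫_{y>0} ∫_{x∈ℝ} exp(−(a(x²+y²)+2bx+c)/y) · y⁻² dx dy equals π·exp(−2√(ac−b²))/√(ac−b²). (Equivalently, the Poincaré density integrates to 1.) -/

import Mathlib

open MeasureTheory Real Set


section aux
variable {k : ℝ}

noncomputable def phiP (k t : ℝ) : ℝ := (t + Real.sqrt (t^2 + 4*k)) / 2

lemma rP_pos (hk : 0 < k) (t : ℝ) : 0 < Real.sqrt (t^2 + 4*k) :=
  Real.sqrt_pos.2 (by positivity)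

lemma abs_lt_rP (hk : 0 < k) (t : ℝ) : |t| < Real.sqrt (t^2 + 4*k) := by
  have h : t^2 < t^2 + 4*k := by linarith
  calc |t| = Real.sqrt (t^2) := (Real.sqrt_sq_eq_abs t).symm
    _ < _ := Real.sqrt_lt_sqrt (sq_nonneg t) h

lemma phiP_pos (hk : 0 < k) (t : ℝ) : 0 < phiP k t := by
  have h := abs_lt_rP hk t
  have := neg_abs_le t
  unfold phiP; linarith

lemma rP_sq (hk : 0 < k) (t : ℝ) : (Real.sqrt (t^2 + 4*k))^2 = t^2 + 4*k :=
  Real.sq_sqrt (by positivity)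

lemma phiP_mul (hk : 0 < k) (t : ℝ) :
    phiP k t * ((Real.sqrt (t^2 + 4*k) - t)/2) = k := by
  have h := rP_sq hk t
  unfold phiP; nlinarith [h]

lemma phiP_hasDerivAt (hk : 0 < k) (t : ℝ) :
    HasDerivAt (phiP k) ((1 + t / Real.sqrt (t^2 + 4*k))/2) t := by
  have h1 : HasDerivAt (fun t : ℝ => t^2 + 4*k) (2*t) t := by
    simpa using ((hasDerivAt_pow 2 t).add_const (4*k))
  have h2 : HasDerivAt (fun t : ℝ => Real.sqrt (t^2 + 4*k))
      ((2*t) / (2 * Real.sqrt (t^2 + 4*k))) t :=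
    h1.sqrt (by positivity)
  have h3 := (hasDerivAt_id t).add h2
  have h4 := h3.div_const 2
  refine h4.congr_deriv ?_
  have hr := (rP_pos hk t).ne'
  field_simp
end aux


section aux2
variable {k a : ℝ}

noncomputable def FP (a k t : ℝ) : ℝ := (phiP k t)^2 / a

lemma phiP_sub (hk : 0 < k) (t : ℝ) : phiP k t - k / phiP k t = t := by
  have h1 := phiP_mul hk t
  have h2 := (phiP_pos hk t).ne'
  field_simp
  unfold phiP at *
  nlinarith [h1]

lemma phiP_inj (hk : 0 < k) : Function.Injective (phiP k) := by
  intro t u h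
  have := phiP_sub hk t
  have := phiP_sub hk u
  rw [h] at *
  linarith

lemma FP_pos (ha : 0 < a) (hk : 0 < k) (t : ℝ) : 0 < FP a k t := by
  have := phiP_pos hk t; unfold FP; positivity

lemma FP_inj (ha : 0 < a) (hk : 0 < k) : Function.Injective (FP a k) := by
  intro t u h
  unfold FP at h
  have h1 : (phiP k t)^2 = (phiP k u)^2 := by
    field_simp at h; exact h
  have h2 : phiP k t = phiP k u := by
    have := phiP_pos hk t; have := phiP_pos hk u
    nlinarith
  exact phiP_inj hk h2

lemma FP_hasDerivAt (ha : 0 < a) (hk : 0 < k) (t : ℝ) :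
    HasDerivAt (FP a k) (2 * phiP k t * ((1 + t / Real.sqrt (t^2 + 4*k))/2) / a) t := by
  have h := ((phiP_hasDerivAt hk t).pow 2).div_const a
  refine h.congr_deriv ?_
  ring

lemma FP_image (ha : 0 < a) (hk : 0 < k) : FP a k '' Set.univ = Set.Ioi (0:ℝ) := by
  apply Set.eq_of_subset_of_subset
  · rintro y ⟨t, -, rfl⟩
    exact FP_pos ha hk t
  · rintro y (hy : 0 < y)
    refine ⟨Real.sqrt (a*y) - k / Real.sqrt (a*y), Set.mem_univ _, ?_⟩
    set s := Real.sqrt (a*y) with hs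
    have hspos : 0 < s := Real.sqrt_pos.2 (by positivity)
    have hs2 : s^2 = a*y := Real.sq_sqrt (by positivity)
    have hrad : (s - k/s)^2 + 4*k = (s + k/s)^2 := by
      field_simp; ring
    have hphi : phiP k (s - k/s) = s := by
      unfold phiP
      rw [hrad, Real.sqrt_sq (by positivity)]
      field_simp
      ring
    unfold FP
    rw [hphi, hs2]
    field_simp

lemma FP_exponent (ha : 0 < a) (hk : 0 < k) {β : ℝ} (hβ : a * β = k^2) (t : ℝ) :
    a * FP a k t + β / FP a k t = t^2 + 2*k := by
  have hφ := phiP_pos hk t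
  have hsub := phiP_sub hk t
  unfold FP
  have ha' := ha.ne'
  have hφ' := hφ.ne'
  have h2 : (phiP k t)^2 - k = t * phiP k t := by
    field_simp at hsub; nlinarith [hsub]
  field_simp
  ring_nf
  nlinarith [h2, hβ, sq_nonneg (phiP k t)]
end aux2


section aux3
variable {k a : ℝ}

lemma phiP_deriv_pos (hk : 0 < k) (t : ℝ) : 0 < (1 + t / Real.sqrt (t^2 + 4*k))/2 := by
  have hr := rP_pos hk t
  have h := abs_lt_rP hk t
  have h2 : -t < Real.sqrt (t^2 + 4*k) := lt_of_le_of_lt (neg_le_abs t) h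
  have : -1 < t / Real.sqrt (t^2 + 4*k) := by
    rw [lt_div_iff₀ hr]; linarith
  linarith

/-- The key simplification of the substituted integrand. -/
lemma FP_integrand (ha : 0 < a) (hk : 0 < k) {β : ℝ} (hβ : a * β = k^2) (t : ℝ) :
    |2 * phiP k t * ((1 + t / Real.sqrt (t^2 + 4*k))/2) / a| *
      (Real.sqrt (FP a k t) * Real.exp (-(a * FP a k t) - β / FP a k t) / (FP a k t)^2)
    = Real.sqrt a / k * ((1 - t / Real.sqrt (t^2 + 4*k)) * Real.exp (-t^2 - 2*k)) := by
  set r := Real.sqrt (t^2 + 4*k) with hrdef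
  have hr := rP_pos hk t
  have hφ := phiP_pos hk t
  have hd := phiP_deriv_pos hk t
  have hsa : 0 < Real.sqrt a := Real.sqrt_pos.2 ha
  have habs : |2 * phiP k t * ((1 + t / r)/2) / a| = 2 * phiP k t * ((1 + t / r)/2) / a := by
    rw [abs_of_pos]; positivity
  have hsq : Real.sqrt (FP a k t) = phiP k t / Real.sqrt a := by
    unfold FP
    rw [show (phiP k t)^2 / a = (phiP k t / Real.sqrt a)^2 by
      rw [div_pow, Real.sq_sqrt ha.le]]
    exact Real.sqrt_sq (by positivity)
  have hexp : -(a * FP a k t) - β / FP a k t = -t^2 - 2*k := by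
    have := FP_exponent ha hk hβ t; linarith
  rw [habs, hsq, hexp]
  have hmul := phiP_mul hk t
  have hFP : FP a k t = (phiP k t)^2 / a := rfl
  rw [hFP]
  have ha' := ha.ne'
  have hφ' := hφ.ne'
  have hr' : r ≠ 0 := hr.ne'
  have hk' := hk.ne'
  have hsa' := hsa.ne'
  have hsaa : Real.sqrt a * Real.sqrt a = a := Real.mul_self_sqrt ha.le
  have hr2 : r^2 = t^2 + 4*k := rP_sq hk t
  have h2 : (phiP k t)^2 * (r - t) = k * (r + t) := by
    have hphi_eq : phiP k t = (t + r)/2 := rfl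
    rw [hphi_eq]
    linear_combination ((r + t)/4) * hr2
  have h3 : (2 * phiP k t * ((1 + t / r)/2) / a) * ((phiP k t / Real.sqrt a) / ((phiP k t^2 / a))^2)
      = Real.sqrt a / k * (1 - t / r) := by
    have e1 : 1 + t/r = (r+t)/r := by field_simp
    have e2 : 1 - t/r = (r-t)/r := by field_simp
    rw [e1, e2]
    field_simp
    linear_combination (-a)*h2 + (-(phiP k t)^2*(r-t))*hsaa
  calc 2 * phiP k t * ((1 + t / r)/2) / a *
      (phiP k t / Real.sqrt a * Real.exp (-t^2 - 2*k) / (phiP k t^2 / a)^2)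
      = ((2 * phiP k t * ((1 + t / r)/2) / a) * ((phiP k t / Real.sqrt a) / ((phiP k t^2 / a))^2)) * Real.exp (-t^2 - 2*k) := by ring
    _ = (Real.sqrt a / k * (1 - t / r)) * Real.exp (-t^2 - 2*k) := by rw [h3]
    _ = Real.sqrt a / k * ((1 - t / r) * Real.exp (-t^2 - 2*k)) := by ring
end aux3

section aux4
variable {k : ℝ}

lemma integrable_gaussE : Integrable (fun t : ℝ => Real.exp (-t^2)) := by
  simpa using integrable_exp_neg_mul_sq (one_pos)

lemma integral_gaussE : ∫ t : ℝ, Real.exp (-t^2) = Real.sqrt Real.pi := by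
  simpa using integral_gaussian 1

lemma cont_ratio (hk : 0 < k) : Continuous (fun t : ℝ => t / Real.sqrt (t^2 + 4*k)) := by
  apply continuous_id.div
  · exact Real.continuous_sqrt.comp (by continuity)
  · exact fun t => (rP_pos hk t).ne'

lemma integrable_oddpart (hk : 0 < k) :
    Integrable (fun t : ℝ => t / Real.sqrt (t^2 + 4*k) * Real.exp (-t^2)) := by
  apply integrable_gaussE.mono' (((cont_ratio hk).mul (by continuity)).aestronglyMeasurable)
  filter_upwards with t
  have h1 := (abs_lt_rP hk t).le
  have hr := rP_pos hk t
  rw [Pi.mul_apply, norm_mul, norm_div]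
  have : ‖Real.sqrt (t^2 + 4*k)‖ = Real.sqrt (t^2 + 4*k) := by
    rw [Real.norm_eq_abs, abs_of_pos hr]
  rw [this]
  have hratio : ‖t‖ / Real.sqrt (t^2 + 4*k) ≤ 1 := by
    rw [div_le_one hr]; exact h1
  have he : ‖Real.exp (-t^2)‖ = Real.exp (-t^2) := by
    rw [Real.norm_eq_abs, abs_of_pos (Real.exp_pos _)]
  rw [he]
  nlinarith [Real.exp_pos (-t^2), norm_nonneg t, hr, hratio]

lemma integral_oddpart (hk : 0 < k) :
    ∫ t : ℝ, t / Real.sqrt (t^2 + 4*k) * Real.exp (-t^2) = 0 := by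
  have h := integral_neg_eq_self
    (fun t : ℝ => t / Real.sqrt (t^2 + 4*k) * Real.exp (-t^2)) volume
  have h2 : (fun t : ℝ => (-t) / Real.sqrt ((-t)^2 + 4*k) * Real.exp (-(-t)^2))
      = fun t : ℝ => -(t / Real.sqrt (t^2 + 4*k) * Real.exp (-t^2)) := by
    funext t; rw [neg_sq]; ring
  rw [h2, integral_neg] at h
  linarith

lemma integrable_main (hk : 0 < k) :
    Integrable (fun t : ℝ =>
      (1 - t / Real.sqrt (t^2 + 4*k)) * Real.exp (-t^2 - 2*k)) := by
  have heq : (fun t : ℝ => (1 - t / Real.sqrt (t^2 + 4*k)) * Real.exp (-t^2 - 2*k))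
      = fun t : ℝ => (Real.exp (-t^2) - t / Real.sqrt (t^2 + 4*k) * Real.exp (-t^2)) * Real.exp (-2*k) := by
    funext t; rw [show (-t^2 - 2*k) = -t^2 + (-2*k) by ring, Real.exp_add]; ring
  rw [heq]
  exact (integrable_gaussE.sub (integrable_oddpart hk)).mul_const _

lemma integral_main (hk : 0 < k) :
    ∫ t : ℝ, (1 - t / Real.sqrt (t^2 + 4*k)) * Real.exp (-t^2 - 2*k)
      = Real.sqrt Real.pi * Real.exp (-2*k) := by
  have heq : (fun t : ℝ => (1 - t / Real.sqrt (t^2 + 4*k)) * Real.exp (-t^2 - 2*k))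
      = fun t : ℝ => (Real.exp (-t^2) - t / Real.sqrt (t^2 + 4*k) * Real.exp (-t^2)) * Real.exp (-2*k) := by
    funext t; rw [show (-t^2 - 2*k) = -t^2 + (-2*k) by ring, Real.exp_add]; ring
  rw [heq, integral_mul_const, integral_sub integrable_gaussE (integrable_oddpart hk),
    integral_gaussE, integral_oddpart hk, sub_zero]
end aux4


/-- The unnormalized Poincaré density integrates over the upper
half-plane to `π·exp(−2√(ac−b²))/√(ac−b²)`. -/
theorem poincare_normalization (a b c : ℝ) (ha : 0 < a) (hc : 0 < c)
    (hdet : 0 < a * c - b ^ 2) :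
    ∫ z in {w : ℝ × ℝ | 0 < w.2},
        Real.exp (-(a * (z.1 ^ 2 + z.2 ^ 2) + 2 * b * z.1 + c) / z.2) / z.2 ^ 2 =
      Real.pi * Real.exp (-2 * Real.sqrt (a * c - b ^ 2)) / Real.sqrt (a * c - b ^ 2) := by
  set k : ℝ := Real.sqrt (a * c - b ^ 2) with hkdef
  have hk : 0 < k := Real.sqrt_pos.2 hdet
  have hk2 : k ^ 2 = a * c - b ^ 2 := Real.sq_sqrt hdet.le
  set β : ℝ := (a * c - b ^ 2) / a with hβdef
  have hβ : a * β = k ^ 2 := by rw [hβdef, hk2]; field_simp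
  have hβpos : 0 < β := div_pos hdet ha
  set f : ℝ × ℝ → ℝ := fun z =>
    Real.exp (-(a * (z.1 ^ 2 + z.2 ^ 2) + 2 * b * z.1 + c) / z.2) / z.2 ^ 2 with hfdef
  set G : ℝ → ℝ := fun y => Real.sqrt y * Real.exp (-(a * y) - β / y) / y ^ 2 with hGdef
  -- pointwise rewriting of the integrand for fixed y > 0
  have hpt : ∀ y : ℝ, 0 < y → ∀ x : ℝ, f (x, y) =
      Real.exp (-(a / y) * (x + b / a) ^ 2) * (Real.exp (-(a * y) - β / y) / y ^ 2) := by
    intro y hy x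
    have harg : -(a * (x ^ 2 + y ^ 2) + 2 * b * x + c) / y
        = -(a / y) * (x + b / a) ^ 2 + (-(a * y) - β / y) := by
      rw [hβdef]; field_simp; ring
    show Real.exp (-(a * (x ^ 2 + y ^ 2) + 2 * b * x + c) / y) / y ^ 2 = _
    rw [harg, Real.exp_add]; ring
  -- integrability in x for fixed y > 0
  have hinner_int : ∀ y : ℝ, 0 < y → Integrable (fun x => f (x, y)) := by
    intro y hy
    have : (fun x => f (x, y)) = fun x =>
        Real.exp (-(a / y) * (x + b / a) ^ 2) * (Real.exp (-(a * y) - β / y) / y ^ 2) :=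
      funext (hpt y hy)
    rw [this]
    exact ((integrable_exp_neg_mul_sq (div_pos ha hy)).comp_add_right (b / a)).mul_const _
  -- value of the inner integral
  have hinner_val : ∀ y : ℝ, 0 < y →
      (∫ x : ℝ, f (x, y)) = Real.sqrt (Real.pi / a) * G y := by
    intro y hy
    have h1 : (fun x => f (x, y)) = fun x =>
        Real.exp (-(a / y) * (x + b / a) ^ 2) * (Real.exp (-(a * y) - β / y) / y ^ 2) :=
      funext (hpt y hy)
    rw [h1, integral_mul_const,
      integral_add_right_eq_self (fun x : ℝ => Real.exp (-(a / y) * x ^ 2)) (b / a),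
      integral_gaussian, show Real.pi / (a / y) = Real.pi / a * y by field_simp,
      Real.sqrt_mul (div_nonneg Real.pi_nonneg ha.le)]
    rw [hGdef]; ring
  -- substitution data
  have hderiv : ∀ t ∈ (Set.univ : Set ℝ), HasDerivWithinAt (FP a k)
      (2 * phiP k t * ((1 + t / Real.sqrt (t^2 + 4*k))/2) / a) Set.univ t :=
    fun t _ => (FP_hasDerivAt ha hk t).hasDerivWithinAt
  have hInj : Set.InjOn (FP a k) Set.univ := (FP_inj ha hk).injOn
  -- the substituted integrand
  have hsubeq : (fun t : ℝ => |2 * phiP k t * ((1 + t / Real.sqrt (t^2 + 4*k))/2) / a| • G (FP a k t))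
      = fun t : ℝ => Real.sqrt a / k * ((1 - t / Real.sqrt (t^2 + 4*k)) * Real.exp (-t^2 - 2*k)) := by
    funext t
    rw [smul_eq_mul, hGdef]
    exact FP_integrand ha hk hβ t
  -- integral of G over Ioi 0
  have hGval : ∫ y in Set.Ioi (0:ℝ), G y = Real.sqrt a / k * (Real.sqrt Real.pi * Real.exp (-2*k)) := by
    rw [← FP_image ha hk,
      integral_image_eq_integral_abs_deriv_smul MeasurableSet.univ hderiv hInj G,
      Measure.restrict_univ, hsubeq, integral_const_mul, integral_main hk]
  -- integrability of G on Ioi 0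
  have hGint : IntegrableOn G (Set.Ioi (0:ℝ)) := by
    rw [IntegrableOn, ← Measure.restrict_univ (μ := (volume : Measure ℝ))]
    have := (integrableOn_image_iff_integrableOn_abs_deriv_smul
      MeasurableSet.univ hderiv hInj G)
    rw [FP_image ha hk] at this
    rw [show (volume : Measure ℝ).restrict Set.univ = volume from Measure.restrict_univ]
    have h2 : IntegrableOn (fun t : ℝ => |2 * phiP k t * ((1 + t / Real.sqrt (t^2 + 4*k))/2) / a| • G (FP a k t)) Set.univ := by
      rw [hsubeq, IntegrableOn, Measure.restrict_univ]
      exact (integrable_main hk).const_mul _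
    have h3 := this.2 h2
    rwa [IntegrableOn] at h3
  -- measurability of f
  have hmeasf : AEStronglyMeasurable f
      ((volume : Measure ℝ).prod ((volume : Measure ℝ).restrict (Set.Ioi 0))) := by
    apply Measurable.aestronglyMeasurable
    rw [hfdef]
    fun_prop
  -- product integrability
  have hprod : Integrable f ((volume : Measure ℝ).prod ((volume : Measure ℝ).restrict (Set.Ioi 0))) := by
    rw [integrable_prod_iff' hmeasf]
    constructor
    · filter_upwards [ae_restrict_mem measurableSet_Ioi] with y hy
      exact hinner_int y hy
    · have hbase : Integrable (fun y => Real.sqrt (Real.pi / a) * G y)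
          ((volume : Measure ℝ).restrict (Set.Ioi 0)) := hGint.const_mul _
      apply hbase.congr
      filter_upwards [ae_restrict_mem measurableSet_Ioi] with y hy
      have hnn : ∀ x : ℝ, ‖f (x, y)‖ = f (x, y) := by
        intro x
        exact norm_of_nonneg (div_nonneg (Real.exp_pos _).le (sq_nonneg _))
      rw [show (fun x => ‖f (x, y)‖) = fun x => f (x, y) from funext hnn]
      exact (hinner_val y hy).symm
  -- set equality
  have hset : {w : ℝ × ℝ | 0 < w.2} = (Set.univ : Set ℝ) ×ˢ Set.Ioi (0:ℝ) := by
    ext ⟨x, y⟩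
    simp [Set.mem_prod]
  -- main computation
  calc ∫ z in {w : ℝ × ℝ | 0 < w.2}, f z
      = ∫ z in (Set.univ : Set ℝ) ×ˢ Set.Ioi (0:ℝ), f z := by rw [hset]
    _ = ∫ z, f z ∂((volume : Measure ℝ).prod ((volume : Measure ℝ).restrict (Set.Ioi 0))) := by
        rw [show (volume : Measure (ℝ × ℝ)) = (volume : Measure ℝ).prod (volume : Measure ℝ) from rfl, ← Measure.prod_restrict, Measure.restrict_univ]
    _ = ∫ y in Set.Ioi (0:ℝ), ∫ x : ℝ, f (x, y) := integral_prod_symm f hprod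
    _ = ∫ y in Set.Ioi (0:ℝ), Real.sqrt (Real.pi / a) * G y :=
        setIntegral_congr_fun measurableSet_Ioi fun y hy => hinner_val y hy
    _ = Real.sqrt (Real.pi / a) * ∫ y in Set.Ioi (0:ℝ), G y := integral_const_mul _ _
    _ = Real.sqrt (Real.pi / a) * (Real.sqrt a / k * (Real.sqrt Real.pi * Real.exp (-2*k))) := by
        rw [hGval]
    _ = Real.pi * Real.exp (-2 * k) / k := by
        have h1 : Real.sqrt (Real.pi / a) * Real.sqrt a = Real.sqrt Real.pi := by
          rw [← Real.sqrt_mul (div_nonneg Real.pi_nonneg ha.le), div_mul_cancel₀ _ ha.ne']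
        have h2 : Real.sqrt Real.pi * Real.sqrt Real.pi = Real.pi :=
          Real.mul_self_sqrt Real.pi_nonneg
        calc Real.sqrt (Real.pi / a) * (Real.sqrt a / k * (Real.sqrt Real.pi * Real.exp (-2*k)))
            = (Real.sqrt (Real.pi / a) * Real.sqrt a) * Real.sqrt Real.pi * Real.exp (-2*k) / k := by
              ring
          _ = Real.sqrt Real.pi * Real.sqrt Real.pi * Real.exp (-2*k) / k := by rw [h1]
          _ = Real.pi * Real.exp (-2 * k) / k := by rw [h2]
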